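/- Let 𝒢 be a periodic evolving graph with period Γ, emulated graph G(𝒢), and extended path set P* = static(𝒫⁰), and let M be a demand matrix. If F : P* → ℝ≥0 is a legal flow in G(𝒢) achieving throughput θ for M, then the temporal flow ℱ defined by ℱ(δ) = (Γ/(1−Δu))·F(p) for every p ∈ P* and every δ obtained from temporal(p) (the identifier of p) by shifting all its times by a nonnegative integer multiple of Γ, is a legal temporal flow in 𝒢 achieving throughput θ for M. -/

import Mathlib

open scoped ENNReal NNReal BigOperators

namespace RDCN

/-- A directed edge. -/
abbrev Edge (V : Type*) := V × V
/-- A temporal path (or a labelled-edge path): a list of edge/time(label) pairs. -/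
abbrev TPath (V : Type*) := List (Edge V × ℕ)
/-- An extended path in the emulated graph: a labelled-edge path together with its
unique identifier (a temporal path). -/
abbrev ExtPath (V : Type*) := TPath V × TPath V

variable {V : Type*}

/-- The vertex sequence of a list of directed edges. -/
def pathVerts (es : List (Edge V)) : List V :=
  match es with
  | [] => []
  | e :: _ => e.1 :: es.map Prod.snd

/-- A nonempty list of directed edges forming a directed path visiting pairwise
distinct vertices. -/
def IsSimpleEdgePath (es : List (Edge V)) : Prop :=
  es ≠ [] ∧ es.Chain' (fun e e' => e.2 = e'.1) ∧ (pathVerts es).Nodup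

/-- `es` is a path from `s` to `d`. -/
def EndpointsOf (es : List (Edge V)) (s d : V) : Prop :=
  es.head?.map Prod.fst = some s ∧ es.getLast?.map Prod.snd = some d

/-- A periodic evolving graph with period `Γ`, timeslot duration `Δ` and
reconfiguration fraction `Δu`. -/
structure PEG (V : Type*) where
  Γ : ℕ
  Γ_pos : 1 ≤ Γ
  E : ℕ → Set (V × V)
  E_periodic : ∀ t, E (t + Γ) = E t
  c : ℕ → V × V → ℝ≥0
  c_periodic : ∀ t e, c (t + Γ) e = c t e
  c_zero : ∀ t e, e ∉ E t → c t e = 0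
  Δ : ℝ≥0
  Δ_pos : 0 < Δ
  Δu : ℝ≥0
  Δu_lt_one : Δu < 1

/-- A legal temporal path in the periodic evolving graph `G`. -/
def IsTemporalPath (G : PEG V) (δ : TPath V) : Prop :=
  δ ≠ [] ∧ (∀ x ∈ δ, x.1 ∈ G.E x.2) ∧
    δ.Chain' (fun x y => x.2 < y.2 ∧ y.2 ≤ x.2 + G.Γ) ∧
    IsSimpleEdgePath (δ.map Prod.fst)

/-- The foundation set `𝒫⁰`: legal temporal paths starting in the first period. -/
def Foundation (G : PEG V) : Set (TPath V) :=
  {δ | IsTemporalPath G δ ∧ ∀ t₀ : ℕ, δ.head?.map Prod.snd = some t₀ → t₀ < G.Γ}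

/-- The temporal path `δ` goes from `s` to `d`. -/
def TEndpoints (δ : TPath V) (s d : V) : Prop :=
  EndpointsOf (δ.map Prod.fst) s d

/-- `𝒫⁰_{s,d}`. -/
def FoundationSD (G : PEG V) (s d : V) : Set (TPath V) :=
  {δ | δ ∈ Foundation G ∧ TEndpoints δ s d}

/-- Shift all times of a temporal path by `k·Γ`. -/
def shiftPath (Γ k : ℕ) (δ : TPath V) : TPath V :=
  δ.map fun x => (x.1, x.2 + k * Γ)

/-- `𝒫*`: all periodic shifts of foundation paths. -/
def PStar (G : PEG V) : Set (TPath V) :=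
  {δ' | ∃ δ ∈ Foundation G, ∃ k : ℕ, δ' = shiftPath G.Γ k δ}

/-- `𝒫*_{s,d}`. -/
def PStarSD (G : PEG V) (s d : V) : Set (TPath V) :=
  {δ | δ ∈ PStar G ∧ TEndpoints δ s d}

/-- A legal temporal flow: nonnegative (enforced by `ℝ≥0`), invariant under
shifting a path's times by `Γ`, and obeying the capacity constraints at all times. -/
structure IsLegalTemporalFlow (G : PEG V) (F : TPath V → ℝ≥0) : Prop where
  periodic : ∀ δ ∈ PStar G, F (shiftPath G.Γ 1 δ) = F δ
  capacity : ∀ (e : Edge V) (t : ℕ),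
    ∑' δ : {δ : TPath V // δ ∈ PStar G ∧ (e, t) ∈ δ}, ((F (δ : TPath V) : ℝ≥0) : ℝ≥0∞)
      ≤ (G.c t e : ℝ≥0∞)

/-- The factor `(1-Δu)/Γ`. -/
noncomputable def capFactor (G : PEG V) : ℝ≥0∞ :=
  ((1 - G.Δu : ℝ≥0) : ℝ≥0∞) / (G.Γ : ℝ≥0∞)

/-- The temporal flow `F` achieves throughput `θ` for the demand matrix `m`:
`((1-Δu)/Γ)·Σ_{δ ∈ 𝒫⁰_{s,d}} F(δ) ≥ θ·m_{s,d}` for all `s, d`. -/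
def AchievesThroughputT (G : PEG V) (F : TPath V → ℝ≥0) (m : V → V → ℝ≥0)
    (θ : ℝ≥0∞) : Prop :=
  ∀ s d : V, θ * (m s d : ℝ≥0∞) ≤
    capFactor G * ∑' δ : FoundationSD G s d, ((F (δ : TPath V) : ℝ≥0) : ℝ≥0∞)

/-- Capacity `ĉ(e,ℓ) = ((1-Δu)/Γ)·c_ℓ(e)` of a labelled edge of the emulated graph. -/
noncomputable def chat (G : PEG V) (e : Edge V) (ℓ : ℕ) : ℝ≥0∞ :=
  capFactor G * (G.c ℓ e : ℝ≥0∞)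

/-- The map `static` sending a temporal path `δ = ⟨(eᵢ,tᵢ)⟩` to the extended path
`(⟨(eᵢ, tᵢ mod Γ)⟩, δ)` with `δ` as the unique identifier. -/
def staticOf (Γ : ℕ) (δ : TPath V) : ExtPath V :=
  (δ.map fun x => (x.1, x.2 % Γ), δ)

/-- `P* = static(𝒫⁰)`, the extended path set of the emulated graph. -/
def PStarStatic (G : PEG V) : Set (ExtPath V) :=
  staticOf G.Γ '' Foundation G

/-- The extended path `p` goes from `s` to `d`. -/
def SEndpoints (p : ExtPath V) (s d : V) : Prop :=
  EndpointsOf (p.1.map Prod.fst) s d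

/-- A legal flow on a set `P` of extended paths of the emulated graph: equal on paths
with identical labelled-edge sequences, and obeying the capacity constraints. -/
structure IsLegalStaticFlow (G : PEG V) (P : Set (ExtPath V)) (F : ExtPath V → ℝ≥0) :
    Prop where
  congr : ∀ p ∈ P, ∀ q ∈ P, p.1 = q.1 → F p = F q
  capacity : ∀ (e : Edge V) (ℓ : ℕ), ℓ < G.Γ →
    ∑' p : {p : ExtPath V // p ∈ P ∧ (e, ℓ) ∈ p.1}, ((F (p : ExtPath V) : ℝ≥0) : ℝ≥0∞)
      ≤ chat G e ℓ

/-- The flow `F` on the extended path set `P` achieves throughput `θ` for `m`: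
`Σ_{p ∈ P_{s,d}} F(p) ≥ θ·m_{s,d}` for all `s, d`. -/
def AchievesThroughputS (P : Set (ExtPath V)) (F : ExtPath V → ℝ≥0) (m : V → V → ℝ≥0)
    (θ : ℝ≥0∞) : Prop :=
  ∀ s d : V, θ * (m s d : ℝ≥0∞) ≤
    ∑' p : {p : ExtPath V // p ∈ P ∧ SEndpoints p s d}, ((F (p : ExtPath V) : ℝ≥0) : ℝ≥0∞)

/-- First time of a temporal path. -/
def tStart (δ : TPath V) : ℕ := (δ.head?.map Prod.snd).getD 0
/-- Last time of a temporal path. -/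
def tEnd (δ : TPath V) : ℕ := (δ.getLast?.map Prod.snd).getD 0

/-- The delay `L(δ) = (t_n − t₁ + 1)·Δ + (Γ−1)·Δ` of a temporal path. -/
noncomputable def delay (G : PEG V) (δ : TPath V) : ℝ≥0∞ :=
  ((tEnd δ - tStart δ + 1 : ℕ) : ℝ≥0∞) * (G.Δ : ℝ≥0∞) +
    ((G.Γ - 1 : ℕ) : ℝ≥0∞) * (G.Δ : ℝ≥0∞)

/-- `Σ_{δ ∈ 𝒫⁰_{s,d}} F(δ)`. -/
noncomputable def sdSum (G : PEG V) (F : TPath V → ℝ≥0) (s d : V) : ℝ≥0∞ :=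
  ∑' δ : FoundationSD G s d, ((F (δ : TPath V) : ℝ≥0) : ℝ≥0∞)

/-- `r_δ = F(δ)/Σ_{δ' ∈ 𝒫⁰_{s,d}} F(δ')` (with value `0` when the denominator is `0`,
which holds automatically since then `F(δ) = 0` for `δ ∈ 𝒫⁰_{s,d}`). -/
noncomputable def rfrac (G : PEG V) (F : TPath V → ℝ≥0) (s d : V) (δ : TPath V) : ℝ≥0∞ :=
  ((F δ : ℝ≥0) : ℝ≥0∞) / sdSum G F s d

/-- Total demand `M_tot = Σ_{s,d} m_{s,d}`. -/
noncomputable def Mtot [Fintype V] (m : V → V → ℝ≥0) : ℝ≥0∞ :=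
  ∑ s : V, ∑ d : V, (m s d : ℝ≥0∞)

/-- Average route delay `ARD(M,F) = Σ_{s,d} (m_{s,d}/M_tot)·Σ_{δ ∈ 𝒫⁰_{s,d}} r_δ·L(δ)`. -/
noncomputable def ARD [Fintype V] (G : PEG V) (F : TPath V → ℝ≥0) (m : V → V → ℝ≥0) :
    ℝ≥0∞ :=
  ∑ s : V, ∑ d : V, ((m s d : ℝ≥0∞) / Mtot m) *
    ∑' δ : FoundationSD G s d, rfrac G F s d (δ : TPath V) * delay G (δ : TPath V)

/-- Average route length
`ARL(M,F) = Σ_{s,d} Σ_{δ ∈ 𝒫⁰_{s,d}} (m_{s,d}/M_tot)·r_δ·len(δ)`. -/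
noncomputable def ARLt [Fintype V] (G : PEG V) (F : TPath V → ℝ≥0) (m : V → V → ℝ≥0) :
    ℝ≥0∞ :=
  ∑ s : V, ∑ d : V, ∑' δ : FoundationSD G s d,
    ((m s d : ℝ≥0∞) / Mtot m) * rfrac G F s d (δ : TPath V) * ((δ : TPath V).length : ℝ≥0∞)


lemma shiftPath_zero (Γ : ℕ) (δ : TPath V) : shiftPath Γ 0 δ = δ := by
  simp [shiftPath]

lemma shiftPath_one_shiftPath (Γ k : ℕ) (δ : TPath V) :
    shiftPath Γ 1 (shiftPath Γ k δ) = shiftPath Γ (k + 1) δ := by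
  simp only [shiftPath, List.map_map]
  refine List.map_congr_left fun x _ => ?_
  simp [Function.comp]
  ring

lemma staticOf_snd (Γ : ℕ) (δ : TPath V) : (staticOf Γ δ).2 = δ := rfl

lemma staticOf_map_fst (Γ : ℕ) (δ : TPath V) :
    (staticOf Γ δ).1.map Prod.fst = δ.map Prod.fst := by
  simp [staticOf, List.map_map, Function.comp_def]

lemma c_add_mul (G : PEG V) (t k : ℕ) (e : Edge V) :
    G.c (t + k * G.Γ) e = G.c t e := by
  induction k with
  | zero => simp
  | succ n ih =>
    rw [show t + (n + 1) * G.Γ = (t + n * G.Γ) + G.Γ by ring, G.c_periodic, ih]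

lemma c_mod (G : PEG V) (t : ℕ) (e : Edge V) : G.c t e = G.c (t % G.Γ) e := by
  conv_lhs => rw [← Nat.mod_add_div t G.Γ, mul_comm]
  rw [c_add_mul]

lemma nodup_of_simple {es : List (Edge V)} (h : IsSimpleEdgePath es) : es.Nodup := by
  obtain ⟨hne, _, hnd⟩ := h
  cases es with
  | nil => simp
  | cons e es' =>
    simp only [pathVerts, List.nodup_cons] at hnd
    exact hnd.2.of_map _

lemma edge_unique (G : PEG V) {δ : TPath V} (h : δ ∈ Foundation G) :
    ∀ ⦃x⦄, x ∈ δ → ∀ ⦃y⦄, y ∈ δ → x.1 = y.1 → x = y :=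
  List.inj_on_of_nodup_map (nodup_of_simple h.1.2.2.2)

lemma factor_cancel (G : PEG V) :
    capFactor G * (((G.Γ : ℝ≥0) / (1 - G.Δu) : ℝ≥0) : ℝ≥0∞) = 1 := by
  have hu : (1 - G.Δu : ℝ≥0) ≠ 0 := by
    simp only [ne_eq, tsub_eq_zero_iff_le, not_le]
    exact G.Δu_lt_one
  have hΓ : (G.Γ : ℝ≥0∞) ≠ 0 :=
    Nat.cast_ne_zero.mpr (Nat.one_le_iff_ne_zero.mp G.Γ_pos)
  have hu' : ((1 - G.Δu : ℝ≥0) : ℝ≥0∞) ≠ 0 := by exact_mod_cast hu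
  rw [ENNReal.coe_div hu]
  unfold capFactor
  rw [ENNReal.coe_natCast, div_eq_mul_inv, div_eq_mul_inv,
    mul_comm ((G.Γ : ℝ≥0∞)) (((1 - G.Δu : ℝ≥0) : ℝ≥0∞))⁻¹,
    mul_mul_mul_comm, ENNReal.mul_inv_cancel hu' ENNReal.coe_ne_top,
    ENNReal.inv_mul_cancel hΓ (ENNReal.natCast_ne_top _), one_mul]

/-- Lemma: static-to-evolving conversion.
If `F` is a legal flow on `P* = static(𝒫⁰)` in the emulated graph achieving
throughput `θ` for `m`, then the temporal flow `ℱ` defined by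
`ℱ(δ) = (Γ/(1−Δu))·F(p)` for every `p ∈ P*` and every `δ` obtained from the
identifier `temporal(p) = p.2` by shifting all times by a nonnegative multiple of `Γ`,
is a legal temporal flow achieving throughput `θ` for `m`. -/
theorem statement1 {V : Type*} [Fintype V] [DecidableEq V] (G : PEG V)
    (m : V → V → ℝ≥0) (θ : ℝ≥0∞) (F : ExtPath V → ℝ≥0)
    (hleg : IsLegalStaticFlow G (PStarStatic G) F)
    (hth : AchievesThroughputS (PStarStatic G) F m θ)
    (ℱ : TPath V → ℝ≥0)
    (hℱ : ∀ p ∈ PStarStatic G, ∀ k : ℕ,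
      ℱ (shiftPath G.Γ k p.2) = ((G.Γ : ℝ≥0) / (1 - G.Δu)) * F p) :
    IsLegalTemporalFlow G ℱ ∧ AchievesThroughputT G ℱ m θ := by
  classical
  have hΓpos : 0 < G.Γ := G.Γ_pos
  set C : ℝ≥0 := (G.Γ : ℝ≥0) / (1 - G.Δu) with hCdef
  -- value of ℱ on shifts
  have hval : ∀ δ₀ ∈ Foundation G, ∀ k : ℕ,
      ℱ (shiftPath G.Γ k δ₀) = C * F (staticOf G.Γ δ₀) := by
    intro δ₀ h₀ k
    have := hℱ (staticOf G.Γ δ₀) ⟨δ₀, h₀, rfl⟩ k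
    rwa [staticOf_snd] at this
  constructor
  · constructor
    · -- periodicity
      rintro δ ⟨δ₀, h₀, k, rfl⟩
      rw [shiftPath_one_shiftPath, hval δ₀ h₀ (k + 1), hval δ₀ h₀ k]
    · -- capacity
      intro e t
      set A := {δ : TPath V // δ ∈ PStar G ∧ (e, t) ∈ δ} with hA
      set B := {p : ExtPath V // p ∈ PStarStatic G ∧ (e, t % G.Γ) ∈ p.1} with hB
      -- base path of an element of A
      have hbase : ∀ a : A, ∃ δ₀, δ₀ ∈ Foundation G ∧ ∃ k, a.1 = shiftPath G.Γ k δ₀ :=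
        fun a => a.2.1
      let base : A → TPath V := fun a => (hbase a).choose
      have hbaseF : ∀ a : A, base a ∈ Foundation G := fun a => (hbase a).choose_spec.1
      have hbaseK : ∀ a : A, ∃ k, a.1 = shiftPath G.Γ k (base a) :=
        fun a => (hbase a).choose_spec.2
      -- the injection A → B
      have hmem : ∀ a : A, (e, t % G.Γ) ∈ (staticOf G.Γ (base a)).1 := by
        intro a
        obtain ⟨k, hk⟩ := hbaseK a
        have hi := a.2.2
        rw [hk] at hi
        simp only [shiftPath, List.mem_map] at hi
        obtain ⟨x, hx, hxe⟩ := hi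
        have he : x.1 = e := (Prod.mk.injEq _ _ _ _).mp hxe |>.1
        have ht : x.2 + k * G.Γ = t := (Prod.mk.injEq _ _ _ _).mp hxe |>.2
        simp only [staticOf, List.mem_map]
        refine ⟨x, hx, ?_⟩
        rw [he, ← ht, Nat.add_mul_mod_self_right]
      let ι : A → B := fun a =>
        ⟨staticOf G.Γ (base a), ⟨base a, hbaseF a, rfl⟩, hmem a⟩
      have hinj : Function.Injective ι := by
        intro a b hab
        have h2 : base a = base b := congrArg (fun p => p.1.2) hab
        obtain ⟨ka, hka⟩ := hbaseK a
        obtain ⟨kb, hkb⟩ := hbaseK b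
        rw [h2] at hka
        -- both a.1 and b.1 contain (e,t)
        have hia := a.2.2; have hib := b.2.2
        rw [hka] at hia; rw [hkb] at hib
        simp only [shiftPath, List.mem_map] at hia hib
        obtain ⟨x, hx, hxe⟩ := hia
        obtain ⟨y, hy, hye⟩ := hib
        have hx1 : x.1 = e := (Prod.mk.injEq _ _ _ _).mp hxe |>.1
        have hx2 : x.2 + ka * G.Γ = t := (Prod.mk.injEq _ _ _ _).mp hxe |>.2
        have hy1 : y.1 = e := (Prod.mk.injEq _ _ _ _).mp hye |>.1
        have hy2 : y.2 + kb * G.Γ = t := (Prod.mk.injEq _ _ _ _).mp hye |>.2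
        have hxy : x = y := edge_unique G (hbaseF b) hx hy (hx1.trans hy1.symm)
        have hkk : ka = kb := by
          have : x.2 + ka * G.Γ = x.2 + kb * G.Γ := by rw [hx2, hxy, hy2]
          have := Nat.add_left_cancel this
          exact Nat.eq_of_mul_eq_mul_right hΓpos this
        apply Subtype.ext
        rw [hka, hkb, hkk]
      have hvals : ∀ a : A, ((ℱ a.1 : ℝ≥0) : ℝ≥0∞)
          ≤ ((C * F ((ι a).1) : ℝ≥0) : ℝ≥0∞) := by
        intro a
        obtain ⟨k, hk⟩ := hbaseK a
        rw [hk, hval (base a) (hbaseF a) k]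
      calc ∑' a : A, ((ℱ a.1 : ℝ≥0) : ℝ≥0∞)
          ≤ ∑' b : B, ((C * F b.1 : ℝ≥0) : ℝ≥0∞) :=
            Summable.tsum_le_tsum_of_inj ι hinj (fun _ _ => zero_le) hvals
              ENNReal.summable ENNReal.summable
        _ = (C : ℝ≥0∞) * ∑' b : B, ((F b.1 : ℝ≥0) : ℝ≥0∞) := by
            simp only [ENNReal.coe_mul]; rw [ENNReal.tsum_mul_left]
        _ ≤ (C : ℝ≥0∞) * chat G e (t % G.Γ) :=
            mul_le_mul_right (hleg.capacity e (t % G.Γ) (Nat.mod_lt _ hΓpos)) _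
        _ = (G.c t e : ℝ≥0∞) := by
            unfold chat
            rw [← mul_assoc, mul_comm (C : ℝ≥0∞) (capFactor G), factor_cancel G,
              one_mul, ← c_mod]
  · -- throughput
    intro s d
    -- the equivalence between FoundationSD and the static s-d path set
    have hsd : ∀ δ : TPath V, SEndpoints (staticOf G.Γ δ) s d ↔ TEndpoints δ s d := by
      intro δ
      unfold SEndpoints TEndpoints
      rw [staticOf_map_fst]
    let e : FoundationSD G s d ≃
        {p : ExtPath V // p ∈ PStarStatic G ∧ SEndpoints p s d} := by
      refine Equiv.ofBijective
        (fun δ => ⟨staticOf G.Γ δ.1, ⟨δ.1, δ.2.1, rfl⟩, (hsd δ.1).mpr δ.2.2⟩) ⟨?_, ?_⟩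
      · intro a b hab
        exact Subtype.ext (congrArg (fun p => p.1.2) hab)
      · rintro ⟨p, ⟨δ, hδ, rfl⟩, hp⟩
        exact ⟨⟨δ, hδ, (hsd δ).mp hp⟩, rfl⟩
    have hsum : ∑' δ : FoundationSD G s d, ((ℱ (δ : TPath V) : ℝ≥0) : ℝ≥0∞)
        = (C : ℝ≥0∞) *
          ∑' p : {p : ExtPath V // p ∈ PStarStatic G ∧ SEndpoints p s d},
            ((F (p : ExtPath V) : ℝ≥0) : ℝ≥0∞) := by
      rw [← Equiv.tsum_eq e (fun p => ((F (p : ExtPath V) : ℝ≥0) : ℝ≥0∞)),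
        ← ENNReal.tsum_mul_left]
      refine tsum_congr fun δ => ?_
      have := hval δ.1 δ.2.1 0
      rw [shiftPath_zero] at this
      rw [this]
      rfl
    calc θ * (m s d : ℝ≥0∞)
        ≤ ∑' p : {p : ExtPath V // p ∈ PStarStatic G ∧ SEndpoints p s d},
            ((F (p : ExtPath V) : ℝ≥0) : ℝ≥0∞) := hth s d
      _ = capFactor G * ∑' δ : FoundationSD G s d, ((ℱ (δ : TPath V) : ℝ≥0) : ℝ≥0∞) := by
          rw [hsum, ← mul_assoc, factor_cancel G, one_mul]

end RDCN
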